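/- arXiv:0909.2265 — 3 statements merged into one kernel-verified Lean document; each statement's English description precedes it below -/
import Mathlib

section
/- Let H : ℝ → ℝ be continuous and let a : I → ℝ be a C² function on an open interval I containing 0 with a'(s) > 0 for all s ∈ I, satisfying a''(s) - a'(s)(1 + a'(s)²) H(s) = 0 on I. Then for all s ∈ I, a'(s)²/(1 + a'(s)²) = h(s), where h(s) = (a'(0)²/(1 + a'(0)²)) · exp(2 ∫₀ˢ H(τ) dτ). -/
theorem stmt1 (H : ℝ → ℝ) (hH : Continuous H) (I : Set ℝ) (hIopen : IsOpen I)
    (hIconn : I.OrdConnected) (h0 : (0 : ℝ) ∈ I)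
    (a a' a'' : ℝ → ℝ)
    (ha' : ∀ s ∈ I, HasDerivAt a (a' s) s)
    (ha'' : ∀ s ∈ I, HasDerivAt a' (a'' s) s)
    (ha''cont : ContinuousOn a'' I)
    (hpos : ∀ s ∈ I, 0 < a' s)
    (hode : ∀ s ∈ I, a'' s - a' s * (1 + (a' s) ^ 2) * H s = 0) :
    ∀ s ∈ I, (a' s) ^ 2 / (1 + (a' s) ^ 2) =
      (a' 0) ^ 2 / (1 + (a' 0) ^ 2) * Real.exp (2 * ∫ τ in (0 : ℝ)..s, H τ) := by
  set F : ℝ → ℝ := fun s => ∫ τ in (0 : ℝ)..s, H τ with hF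
  set g : ℝ → ℝ := fun s => (a' s) ^ 2 / (1 + (a' s) ^ 2) with hg
  set φ : ℝ → ℝ := fun s => g s * Real.exp (-(2 * F s)) with hφdef
  have hden : ∀ s, (0:ℝ) < 1 + (a' s) ^ 2 := fun s => by positivity
  have hFderiv : ∀ s : ℝ, HasDerivAt F (H s) s := fun s =>
    intervalIntegral.integral_hasDerivAt_right (hH.intervalIntegrable 0 s)
      (hH.stronglyMeasurableAtFilter _ _) hH.continuousAt
  have hgderiv : ∀ s ∈ I, HasDerivAt g (2 * a' s * a'' s / (1 + (a' s) ^ 2) ^ 2) s := by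
    intro s hs
    have h1 : HasDerivAt (fun t => (a' t) ^ 2) (2 * a' s * a'' s) s := by
      simpa [mul_comm, mul_assoc, mul_left_comm] using (ha'' s hs).fun_pow 2
    have h2 : HasDerivAt (fun t => 1 + (a' t) ^ 2) (2 * a' s * a'' s) s := by
      simpa using (hasDerivAt_const s (1:ℝ)).fun_add h1
    have := h1.fun_div h2 (ne_of_gt (hden s))
    refine this.congr_deriv ?_
    symm
    field_simp
    ring
  have hφderiv : ∀ s ∈ I, HasDerivAt φ 0 s := by
    intro s hs
    have hE : HasDerivAt (fun t => Real.exp (-(2 * F t))) (-(2 * H s) * Real.exp (-(2 * F s))) s := by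
      have : HasDerivAt (fun t => -(2 * F t)) (-(2 * H s)) s := ((hFderiv s).const_mul 2).neg
      simpa [mul_comm] using this.exp
    have := (hgderiv s hs).fun_mul hE
    refine this.congr_deriv ?_
    symm
    have ha''eq : a'' s = a' s * (1 + (a' s) ^ 2) * H s := by
      have := hode s hs; linarith
    rw [ha''eq]
    have hd := ne_of_gt (hden s)
    simp only [hg]
    field_simp
    ring
  have hconv : Convex ℝ I := hIconn.convex
  have hconst : ∀ s ∈ I, φ s = φ 0 := by
    intro s hs
    apply hconv.is_const_of_fderivWithin_eq_zero
      (fun x hx => (hφderiv x hx).differentiableAt.differentiableWithinAt) ?_ hs h0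
    intro x hx
    rw [fderivWithin_of_isOpen hIopen hx, (hφderiv x hx).hasFDerivAt.fderiv]
    ext y
    simp
  intro s hs
  have h1 : φ s = φ 0 := hconst s hs
  have hF0 : F 0 = 0 := by simp [hF]
  have hexp : Real.exp (-(2 * F s)) ≠ 0 := Real.exp_ne_zero _
  have : g s * Real.exp (-(2 * F s)) = g 0 := by
    simpa [hφdef, hF0] using h1
  have : g s = g 0 * Real.exp (2 * F s) := by
    rw [← this]
    rw [mul_assoc, ← Real.exp_add]
    simp
  simpa [hg, hF] using this
end

section
/- Let H : ℝ → ℝ be continuous, let h₀ ∈ ℝ with 0 < h₀ < 1, and define h(t) = h₀ · exp(2 ∫₀ᵗ H(τ) dτ). Suppose I is an open interval containing 0 on which 0 < h(t) < 1 for all t ∈ I, and define a(s) = a₀ + ∫₀ˢ √(h(t)/(1 - h(t))) dt. Then a is C² on I and satisfies a''(s) - a'(s)(1 + a'(s)²) H(s) = 0 for all s ∈ I. -/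
open Real intervalIntegral

theorem stmt2 (H : ℝ → ℝ) (hH : Continuous H) (h₀ a₀ : ℝ) (hh₀ : 0 < h₀ ∧ h₀ < 1)
    (h : ℝ → ℝ) (hdef : ∀ t, h t = h₀ * Real.exp (2 * ∫ τ in (0 : ℝ)..t, H τ))
    (I : Set ℝ) (hIopen : IsOpen I) (hIconn : I.OrdConnected) (h0I : (0 : ℝ) ∈ I)
    (hhI : ∀ t ∈ I, 0 < h t ∧ h t < 1)
    (a : ℝ → ℝ) (hadef : ∀ s, a s = a₀ + ∫ t in (0 : ℝ)..s, Real.sqrt (h t / (1 - h t))) :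
    ContDiffOn ℝ 2 a I ∧
      ∀ s ∈ I, deriv (deriv a) s - deriv a s * (1 + (deriv a s) ^ 2) * H s = 0 := by
  set Φ : ℝ → ℝ := fun t => ∫ τ in (0 : ℝ)..t, H τ with hΦdef
  have hΦ : ∀ t, HasDerivAt Φ (H t) t := fun t =>
    (hH.integral_hasStrictDerivAt 0 t).hasDerivAt
  have hfun : h = fun t => h₀ * Real.exp (2 * Φ t) := funext fun t => hdef t
  have hΦC1 : ContDiff ℝ 1 Φ := by
    rw [contDiff_one_iff_deriv]
    refine ⟨fun t => (hΦ t).differentiableAt, ?_⟩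
    have : deriv Φ = H := funext fun t => (hΦ t).deriv
    rw [this]; exact hH
  have hhC1 : ContDiff ℝ 1 h := by
    rw [hfun]
    exact contDiff_const.mul ((contDiff_const.mul hΦC1).exp)
  have hhderiv : ∀ t, HasDerivAt h (h t * (2 * H t)) t := by
    intro t
    have := ((hΦ t).const_mul 2).exp.const_mul h₀
    rw [hfun]
    refine this.congr_deriv ?_
    show _ = h₀ * Real.exp (2 * Φ t) * (2 * H t)
    ring
  set f : ℝ → ℝ := fun t => Real.sqrt (h t / (1 - h t)) with hf
  set g : ℝ → ℝ := fun t => h t / (1 - h t) with hg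
  have hIs : ∀ s ∈ I, Set.uIcc 0 s ⊆ I := fun s hs =>
    Set.OrdConnected.uIcc_subset hIconn h0I hs
  have hne : ∀ t ∈ I, (1 : ℝ) - h t ≠ 0 := fun t ht =>
    sub_ne_zero.mpr (ne_of_gt (hhI t ht).2)
  have hgpos : ∀ t ∈ I, 0 < g t := fun t ht =>
    div_pos (hhI t ht).1 (by linarith [(hhI t ht).2])
  have hgcont : ContinuousOn g I :=
    (hhC1.continuous.continuousOn).div
      (continuousOn_const.sub hhC1.continuous.continuousOn) hne
  have hfcont : ContinuousOn f I := hgcont.sqrt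
  have hfCA : ∀ s ∈ I, ContinuousAt f s := fun s hs =>
    hfcont.continuousAt (hIopen.mem_nhds hs)
  -- a' = f on I
  have haderiv : ∀ s ∈ I, HasDerivAt a (f s) s := by
    intro s hs
    have hint : IntervalIntegrable f MeasureTheory.volume 0 s :=
      (hfcont.mono (hIs s hs)).intervalIntegrable
    have h1 : HasDerivAt (fun u => ∫ t in (0:ℝ)..u, f t) (f s) s :=
      intervalIntegral.integral_hasDerivAt_right hint
        (hfcont.stronglyMeasurableAtFilter hIopen s hs) (hfCA s hs)
    have : a = fun u => a₀ + ∫ t in (0:ℝ)..u, f t := funext fun u => hadef u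
    rw [this]
    exact h1.const_add a₀
  have hderivaeq : Set.EqOn (deriv a) f I := fun s hs => (haderiv s hs).deriv
  -- g has derivative on I
  have hgderiv : ∀ s ∈ I, HasDerivAt g (2 * H s * h s / (1 - h s) ^ 2) s := by
    intro s hs
    have := (hhderiv s).div ((hasDerivAt_const s (1:ℝ)).sub (hhderiv s)) (hne s hs)
    refine this.congr_deriv ?_
    simp only [Pi.sub_apply]
    ring
  -- f has derivative on I
  have hfderiv : ∀ s ∈ I, HasDerivAt f (f s * (1 + f s ^ 2) * H s) s := by
    intro s hs
    have hgne : g s ≠ 0 := (hgpos s hs).ne'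
    have := (hgderiv s hs).sqrt hgne
    convert this using 1
    have hx := (hhI s hs).1
    have hy : (0:ℝ) < 1 - h s := by linarith [(hhI s hs).2]
    have hsq : f s ^ 2 = h s / (1 - h s) := Real.sq_sqrt (hgpos s hs).le
    have hfpos : 0 < f s := Real.sqrt_pos.mpr (hgpos s hs)
    have hroot : Real.sqrt (g s) = f s := rfl
    rw [hsq, hroot]
    have hsq' : f s ^ 2 * (1 - h s) = h s := by
      rw [hsq]; field_simp
    field_simp
    linear_combination H s * hsq'
  constructor
  · rw [show (2 : WithTop ℕ∞) = 1 + 1 by norm_num, contDiffOn_succ_iff_deriv_of_isOpen hIopen]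
    refine ⟨fun s hs => (haderiv s hs).differentiableAt.differentiableWithinAt, by simp, ?_⟩
    have hfC1 : ContDiffOn ℝ 1 f I := by
      apply ContDiffOn.sqrt _ (fun x hx => (hgpos x hx).ne')
      exact (hhC1.contDiffOn).div ((contDiff_const.sub hhC1).contDiffOn) hne
    exact hfC1.congr hderivaeq
  · intro s hs
    have hev : deriv a =ᶠ[nhds s] f :=
      Filter.eventuallyEq_of_mem (hIopen.mem_nhds hs) hderivaeq
    have : deriv (deriv a) s = deriv f s := Filter.EventuallyEq.deriv_eq hev
    rw [this, (hfderiv s hs).deriv, hderivaeq hs]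
    ring
end

section
/- Let T be the gradient of a C² function f : ℝⁿ → ℝ, and suppose that at a point p, the directional derivative of ‖T‖² vanishes in every direction orthogonal to T(p), and T(p) ≠ 0. Then (DT)(p)(T(p)) is parallel to T(p). -/
open scoped RealInnerProductSpace

theorem stmt10 (n : ℕ) (f : EuclideanSpace ℝ (Fin n) → ℝ) (hf : ContDiff ℝ 2 f)
    (T : EuclideanSpace ℝ (Fin n) → EuclideanSpace ℝ (Fin n)) (hT : T = gradient f)
    (p : EuclideanSpace ℝ (Fin n)) (hTp : T p ≠ 0)
    (hperp : ∀ X : EuclideanSpace ℝ (Fin n), ⟪X, T p⟫ = 0 →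
      fderiv ℝ (fun q => ‖T q‖ ^ 2) p X = 0) :
    ∃ c : ℝ, fderiv ℝ T p (T p) = c • T p := by
  have hdf : Differentiable ℝ f := hf.differentiable (by norm_num)
  have hf' : ContDiff ℝ 1 (fderiv ℝ f) := hf.fderiv_right (by norm_num)
  have hdf' : DifferentiableAt ℝ (fderiv ℝ f) p := hf'.differentiable (by norm_num) p
  let iso : StrongDual ℝ (EuclideanSpace ℝ (Fin n)) ≃ₗᵢ[ℝ] EuclideanSpace ℝ (Fin n) :=
    ((InnerProductSpace.toDual ℝ (EuclideanSpace ℝ (Fin n))).symm : _)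
  have hTdef : T = ⇑iso ∘ (fderiv ℝ f) := by
    funext q; rw [hT]; rfl
  have hfd : fderiv ℝ T p =
      (iso : StrongDual ℝ (EuclideanSpace ℝ (Fin n)) →L[ℝ] EuclideanSpace ℝ (Fin n)).comp
      (fderiv ℝ (fderiv ℝ f) p) := by
    rw [hTdef]; exact LinearIsometryEquiv.comp_fderiv iso
  have hsymm : ∀ v w, fderiv ℝ (fderiv ℝ f) p v w = fderiv ℝ (fderiv ℝ f) p w v :=
    second_derivative_symmetric (fun y => (hdf y).hasFDerivAt) hdf'.hasFDerivAt
  have hApp : ∀ v w : EuclideanSpace ℝ (Fin n),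
      ⟪fderiv ℝ T p v, w⟫ = fderiv ℝ (fderiv ℝ f) p v w := by
    intro v w
    rw [hfd]
    exact InnerProductSpace.toDual_symm_apply
  have hTdiff : DifferentiableAt ℝ T p := by
    rw [hTdef]; exact iso.differentiableAt.comp p hdf'
  have hns : ∀ X : EuclideanSpace ℝ (Fin n),
      fderiv ℝ (fun q => ‖T q‖ ^ 2) p X = 2 * ⟪fderiv ℝ T p X, T p⟫ := by
    intro X
    have he : (fun q => ‖T q‖ ^ 2) = fun q => ⟪T q, T q⟫ := by
      funext q; rw [real_inner_self_eq_norm_sq]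
    rw [he, fderiv_inner_apply (𝕜 := ℝ) hTdiff hTdiff X, real_inner_comm]
    ring
  have hkey : ∀ X : EuclideanSpace ℝ (Fin n), ⟪X, T p⟫ = 0 →
      ⟪X, fderiv ℝ T p (T p)⟫ = 0 := by
    intro X hX
    have h1 := hperp X hX
    rw [hns X] at h1
    have h2 : ⟪fderiv ℝ T p X, T p⟫ = 0 := by linarith
    rw [hApp] at h2
    rw [real_inner_comm, hApp, hsymm]
    exact h2
  have hmem : fderiv ℝ T p (T p) ∈ ((ℝ ∙ T p)ᗮ)ᗮ := by
    intro u hu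
    rw [Submodule.mem_orthogonal_singleton_iff_inner_left] at hu
    exact hkey u hu
  rw [Submodule.orthogonal_orthogonal] at hmem
  rcases Submodule.mem_span_singleton.1 hmem with ⟨c, hc⟩
  exact ⟨c, hc.symm⟩
end
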